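/- Let a be a Nash equilibrium allocation in an identical-resource RSG with common quota q, and let c be a coalition such that for every pair of resources i ∈ H(a) and i' ∈ L(a), |a_i ∩ c| ≤ |a_{i'} ∩ c| + 1. Then a is c-stable: coalition c has no Pareto-improving deviation at a. -/

import Mathlib

variable {N M : Type*}

/-- Number of agents assigned to resource `i` at allocation `a`. -/
def load [Fintype N] [DecidableEq M] (a : N → M) (i : M) : ℕ :=
  (Finset.univ.filter (fun j => a j = i)).card

/-- The cost incurred by agent `j` at allocation `a` for cost profile `f`. -/
def cost [Fintype N] [DecidableEq M] (f : M → ℕ → ℕ) (a : N → M) (j : N) : ℕ :=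
  f (a j) (load a (a j))

/-- The maximum cost over resources at allocation `a`. -/
def maxcost [Fintype N] [Fintype M] [DecidableEq M] (f : M → ℕ → ℕ) (a : N → M) : ℕ :=
  Finset.univ.sup (fun i => f i (load a i))

/-- The minmaxcost `α` of the RSG: minimum over allocations of the maxcost. -/
noncomputable def minmax (N : Type*) [Fintype N] [Fintype M] [DecidableEq M] (f : M → ℕ → ℕ) : ℕ :=
  sInf (Set.range (maxcost (N := N) f))

/-- The quota of resource `i`: the largest `t` with `f i t ≤ α`. -/
noncomputable def quota (f : M → ℕ → ℕ) (α : ℕ) (i : M) : ℕ :=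
  sSup {t | f i t ≤ α}

/-- `a` is a Nash equilibrium: no single agent can strictly decrease its cost
by switching to another resource. -/
def Nash [Fintype N] [DecidableEq M] (f : M → ℕ → ℕ) (a : N → M) : Prop :=
  ∀ j : N, ∀ i : M, i ≠ a j → cost f a j ≤ f i (load a i + 1)

/-- `a` is `c`-stable: coalition `c` has no deviation making every member weakly
better off and some member strictly better off. -/
def cStable [Fintype N] [DecidableEq N] [DecidableEq M]
    (f : M → ℕ → ℕ) (a : N → M) (c : Finset N) : Prop :=
  ¬ ∃ b : N → M, (∀ j ∉ c, b j = a j) ∧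
      (∀ j ∈ c, cost f b j ≤ cost f a j) ∧ (∃ j ∈ c, cost f b j < cost f a j)

lemma RSGaux {e s k v SE SC : ℕ} (hs : s ≤ 1) (hB : k + 1 ≤ e + s) (hA : SE + e + s ≤ SC)
    (hC : SC ≤ k * (v + 1)) (hD : e * v ≤ SE) : False := by
  nlinarith [mul_le_mul_left hB (v + 1), mul_le_mul_left hs v, hA, hC, hD]

/-- In an identical-resource RSG, a Nash equilibrium `a` is `c`-stable provided that for
every high resource `i` and low resource `i'`, the number of members of `c` on `i`
exceeds the number on `i'` by at most one. -/
theorem identical_sufficient_stability [Fintype N] [DecidableEq N]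
    [Fintype M] [DecidableEq M] [Nonempty M]
    (f : ℕ → ℕ) (hmono : StrictMono f) (hzero : f 0 = 0)
    (q : ℕ) (hq : q = quota (fun _ : M => f) (minmax N (fun _ : M => f)) (Classical.arbitrary M))
    (a : N → M) (hNash : Nash (fun _ : M => f) a)
    (c : Finset N)
    (hcond : ∀ i i' : M, load a i = q → load a i' = q - 1 →
      (c.filter (fun j => a j = i)).card ≤ (c.filter (fun j => a j = i')).card + 1) :
    cStable (fun _ : M => f) a c := by
  classical
  rintro ⟨b, hfix, hweak, j₀, hj₀c, hj₀lt⟩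
  haveI : Nonempty N := ⟨j₀⟩
  set K : ℕ := Finset.univ.sup (load a) with hKdef
  have hle : ∀ i, load a i ≤ K := fun i => Finset.le_sup (Finset.mem_univ i)
  have hmemload : ∀ (g : N → M) (j : N), 1 ≤ load g (g j) := by
    intro g j
    have hj : j ∈ Finset.univ.filter (fun j' => g j' = g j) := by simp
    exact Finset.card_pos.mpr ⟨j, hj⟩
  have hK1 : 1 ≤ K := le_trans (hmemload a j₀) (hle _)
  obtain ⟨imax, -, himax⟩ :=
    Finset.exists_mem_eq_sup Finset.univ ⟨Classical.arbitrary M, Finset.mem_univ _⟩ (load a)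
  have himax' : load a imax = K := himax.symm
  have hjm : (Finset.univ.filter (fun j => a j = imax)).Nonempty := by
    rw [← Finset.card_pos]
    show 0 < load a imax
    omega
  obtain ⟨jmax, hjmax⟩ := hjm
  have hjmax' : a jmax = imax := (Finset.mem_filter.mp hjmax).2
  have hKlow : ∀ i, K ≤ load a i + 1 := by
    intro i
    by_cases hi : i = a jmax
    · rw [hi, hjmax', himax']; omega
    · have h := hNash jmax i hi
      have h' : f (load a (a jmax)) ≤ f (load a i + 1) := h
      rw [hjmax', himax'] at h'
      exact hmono.le_iff_le.mp h'
  have hsum : ∀ g : N → M, ∑ i, load g i = Fintype.card N := by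
    intro g
    rw [← Finset.card_univ]
    exact (Finset.card_eq_sum_card_fiberwise (fun x _ => Finset.mem_univ (g x))).symm
  -- maxcost of a is f K
  have hmaxa : maxcost (fun _ : M => f) a = f K := by
    apply le_antisymm
    · exact Finset.sup_le fun i _ => hmono.monotone (hle i)
    · rw [← himax']
      exact Finset.le_sup (f := fun i => (fun _ : M => f) i (load a i)) (Finset.mem_univ imax)
  have hαK : minmax N (fun _ : M => f) = f K := by
    apply le_antisymm
    · exact Nat.sInf_le ⟨a, hmaxa⟩
    · apply le_csInf (Set.range_nonempty _)
      rintro v ⟨b', rfl⟩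
      by_contra hlt
      push_neg at hlt
      have hall : ∀ i, load b' i < K := by
        intro i
        have h1 : f (load b' i) ≤ maxcost (fun _ : M => f) b' :=
          Finset.le_sup (f := fun i' => (fun _ : M => f) i' (load b' i')) (Finset.mem_univ i)
        exact hmono.lt_iff_lt.mp (lt_of_le_of_lt h1 hlt)
      have h2 : ∑ i, load b' i < ∑ i, load a i := by
        calc ∑ i, load b' i ≤ ∑ _i : M, (K - 1) :=
              Finset.sum_le_sum (fun i _ => by have := hall i; omega)
          _ < ∑ i, load a i := by
              apply Finset.sum_lt_sum (fun i _ => by have := hKlow i; omega)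
              exact ⟨imax, Finset.mem_univ _, by rw [himax']; omega⟩
      rw [hsum b', hsum a] at h2
      exact lt_irrefl _ h2
  have hqK : q = K := by
    rw [hq, hαK, quota]
    have hset : {t | (fun _ : M => f) (Classical.arbitrary M) t ≤ f K} = Set.Iic K := by
      ext t
      simpa using hmono.le_iff_le
    rw [hset, csSup_Iic]
  rw [hqK] at hcond
  -- deviation facts
  have hmb : ∀ j ∈ c, load b (b j) ≤ load a (a j) := fun j hj => hmono.le_iff_le.mp (hweak j hj)
  have hmb₀ : load b (b j₀) < load a (a j₀) := hmono.lt_iff_lt.mp hj₀lt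
  -- load balance identity
  have hbal : ∀ i, load b i + (c.filter fun j => a j = i).card
      = load a i + (c.filter fun j => b j = i).card := by
    intro i
    have key : ∀ g : N → M, load g i = (c.filter fun j => g j = i).card
        + ((cᶜ : Finset N).filter fun j => g j = i).card := by
      intro g
      rw [load, ← Finset.card_union_of_disjoint
        (Finset.disjoint_filter_filter (disjoint_compl_right)),
        ← Finset.filter_union, Finset.union_compl]
    have hcc : ((cᶜ : Finset N).filter fun j => b j = i)
        = ((cᶜ : Finset N).filter fun j => a j = i) := by
      apply Finset.filter_congr
      intro j hj
      rw [hfix j (by simpa using hj)]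
    have k1 := key a
    have k2 := key b
    rw [hcc] at k2
    omega
  have hmtop : ∀ i, load b i ≤ K := by
    intro i
    by_cases hcb : (c.filter fun j => b j = i).Nonempty
    · obtain ⟨j, hj⟩ := hcb
      obtain ⟨hjc, hbj⟩ := Finset.mem_filter.mp hj
      calc load b i = load b (b j) := by rw [hbj]
        _ ≤ load a (a j) := hmb j hjc
        _ ≤ K := hle _
    · have h0 : (c.filter fun j => b j = i).card = 0 := by
        simp [Finset.not_nonempty_iff_eq_empty.mp hcb]
      have := hbal i
      have := hle i
      omega
  -- partition of resources by load under b
  set E : Finset M := Finset.univ.filter (fun i => load b i = K) with hEdef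
  set Ch : Finset M := Finset.univ.filter (fun i => ¬ load b i = K) with hChdef
  set ChH : Finset M := Ch.filter (fun i => load a i = K) with hChHdef
  set EL : Finset M := E.filter (fun i => load a i = K - 1) with hELdef
  set EH : Finset M := E.filter (fun i => load a i = K) with hEHdef
  set HH : Finset M := Finset.univ.filter (fun i => load a i = K) with hHHdef
  set e : ℕ := ∑ i ∈ E, (K - load a i) with hedef
  have hmemE : ∀ i ∈ E, load b i = K := fun i hi => (Finset.mem_filter.mp hi).2
  have hmemCh : ∀ i ∈ Ch, load b i ≠ K := fun i hi => (Finset.mem_filter.mp hi).2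
  have heEL : e = EL.card := by
    rw [hedef, hELdef, Finset.card_filter]
    apply Finset.sum_congr rfl
    intro i hi
    have h1 := hle i
    have h2 := hKlow i
    split_ifs with h <;> omega
  -- conservation : total decrease on Ch equals e
  have hEm : ∑ i ∈ E, load b i = ∑ i ∈ E, load a i + e := by
    rw [hedef, ← Finset.sum_add_distrib]
    apply Finset.sum_congr rfl
    intro i hi
    have h1 := hle i
    have h2 := hmemE i hi
    omega
  have hChm : ∑ i ∈ Ch, load a i = ∑ i ∈ Ch, load b i + ∑ i ∈ Ch, (load a i - load b i) := by
    rw [← Finset.sum_add_distrib]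
    apply Finset.sum_congr rfl
    intro i hi
    have h1 := hmtop i
    have h2 := hKlow i
    have h3 := hmemCh i hi
    omega
  have hXe : ∑ i ∈ Ch, (load a i - load b i) = e := by
    have h3 : ∑ i ∈ E, load b i + ∑ i ∈ Ch, load b i = ∑ i, load b i :=
      Finset.sum_filter_add_sum_filter_not _ _ _
    have h4 : ∑ i ∈ E, load a i + ∑ i ∈ Ch, load a i = ∑ i, load a i :=
      Finset.sum_filter_add_sum_filter_not _ _ _
    have h5 := hsum a
    have h6 := hsum b
    omega
  -- fiberwise counts
  have hfibB : (c.filter fun j => load b (b j) = K).card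
      = ∑ i ∈ E, (c.filter fun j => b j = i).card := by
    rw [Finset.card_eq_sum_card_fiberwise (f := b) (t := E)
      (fun j hj => by
        simp only [hEdef, Finset.mem_coe, Finset.mem_filter, Finset.mem_univ, true_and]
        have := (Finset.mem_filter.mp hj).2
        rw [← (Finset.mem_filter.mp hj).2])]
    apply Finset.sum_congr rfl
    intro i hi
    congr 1
    ext j
    simp only [Finset.mem_filter]
    constructor
    · rintro ⟨⟨hjc, -⟩, hji⟩; exact ⟨hjc, hji⟩
    · rintro ⟨hjc, hji⟩; exact ⟨⟨hjc, by rw [hji]; exact hmemE i hi⟩, hji⟩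
  have hfibA : (c.filter fun j => load a (a j) = K).card
      = ∑ i ∈ HH, (c.filter fun j => a j = i).card := by
    rw [Finset.card_eq_sum_card_fiberwise (f := a) (t := HH)
      (fun j hj => by
        simp only [hHHdef, Finset.mem_coe, Finset.mem_filter, Finset.mem_univ, true_and]
        rw [← (Finset.mem_filter.mp hj).2])]
    apply Finset.sum_congr rfl
    intro i hi
    congr 1
    ext j
    simp only [Finset.mem_filter]
    constructor
    · rintro ⟨⟨hjc, -⟩, hji⟩; exact ⟨hjc, hji⟩
    · rintro ⟨hjc, hji⟩; exact ⟨⟨hjc, by rw [hji]; exact (Finset.mem_filter.mp hi).2⟩, hji⟩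
  -- members landing on E
  have hEcb : ∑ i ∈ E, (c.filter fun j => b j = i).card
      = ∑ i ∈ E, (c.filter fun j => a j = i).card + e := by
    rw [hedef, ← Finset.sum_add_distrib]
    apply Finset.sum_congr rfl
    intro i hi
    have h1 := hbal i
    have h2 := hle i
    have h3 := hmemE i hi
    omega
  -- split sums
  have hsplitE : ∑ i ∈ E, (c.filter fun j => a j = i).card
      = ∑ i ∈ EH, (c.filter fun j => a j = i).card
        + ∑ i ∈ EL, (c.filter fun j => a j = i).card := by
    rw [hEHdef, ← Finset.sum_filter_add_sum_filter_not E (fun i => load a i = K)]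
    congr 1
    rw [hELdef]
    apply Finset.sum_congr _ (fun _ _ => rfl)
    apply Finset.filter_congr
    intro i hi
    have h1 := hle i
    have h2 := hKlow i
    constructor
    · intro h; omega
    · intro h; omega
  have hsplitH : ∑ i ∈ HH, (c.filter fun j => a j = i).card
      = ∑ i ∈ EH, (c.filter fun j => a j = i).card
        + ∑ i ∈ ChH, (c.filter fun j => a j = i).card := by
    rw [← Finset.sum_filter_add_sum_filter_not HH (fun i => load b i = K)]
    congr 1
    · apply Finset.sum_congr _ (fun _ _ => rfl)
      rw [hHHdef, hEHdef, hEdef, Finset.filter_filter, Finset.filter_filter]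
      apply Finset.filter_congr
      intro i _
      constructor
      · intro h; tauto
      · intro h; tauto
    · apply Finset.sum_congr _ (fun _ _ => rfl)
      rw [hHHdef, hChHdef, hChdef, Finset.filter_filter, Finset.filter_filter]
      apply Finset.filter_congr
      intro i _
      constructor
      · intro h; tauto
      · intro h; tauto
  have hsub : (c.filter fun j => load b (b j) = K) ⊆ (c.filter fun j => load a (a j) = K) := by
    intro j hj
    obtain ⟨hjc, hjK⟩ := Finset.mem_filter.mp hj
    refine Finset.mem_filter.mpr ⟨hjc, ?_⟩
    have h1 := hmb j hjc
    have h2 := hle (a j)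
    omega
  have hcase : load a (a j₀) = K ∨ load a (a j₀) = K - 1 := by
    have h1 := hle (a j₀)
    have h2 := hKlow (a j₀)
    omega
  have key : ∃ s : ℕ, s ≤ 1 ∧ ChH.card + 1 ≤ e + s ∧
      (∑ i ∈ EL, (c.filter fun j => a j = i).card) + e + s
        ≤ ∑ i ∈ ChH, (c.filter fun j => a j = i).card := by
    rcases hcase with hK0 | hK0
    · -- j₀ originates from a high resource
      refine ⟨1, le_refl 1, ?_, ?_⟩
      · -- ChH.card ≤ e
        have hXb : ChH.card ≤ ∑ i ∈ Ch, (load a i - load b i) := by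
          rw [hChHdef, Finset.card_filter]
          apply Finset.sum_le_sum
          intro i hi
          have h1 := hmemCh i hi
          have h2 := hmtop i
          have h3 := hKlow i
          split_ifs with h <;> omega
        omega
      · -- strict improvement: j₀ lands cheap
        have hersub : (c.filter fun j => load b (b j) = K)
            ⊆ (c.filter fun j => load a (a j) = K).erase j₀ := by
          intro j hj
          refine Finset.mem_erase.mpr ⟨?_, hsub hj⟩
          rintro rfl
          have := (Finset.mem_filter.mp hj).2
          omega
        have hj₀mem : j₀ ∈ (c.filter fun j => load a (a j) = K) :=
          Finset.mem_filter.mpr ⟨hj₀c, hK0⟩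
        have hcards := Finset.card_le_card hersub
        rw [Finset.card_erase_of_mem hj₀mem] at hcards
        have hpos : 1 ≤ (c.filter fun j => load a (a j) = K).card :=
          Finset.card_pos.mpr ⟨j₀, hj₀mem⟩
        rw [hfibB, hEcb, hsplitE] at hcards
        rw [hfibA, hsplitH] at hcards hpos
        omega
    · -- j₀ originates from a low resource
      refine ⟨0, by omega, ?_, ?_⟩
      · -- ChH.card + 1 ≤ e
        have hm1 : load b (b j₀) + 2 ≤ K := by omega
        have hi₁Ch : b j₀ ∈ Ch := by
          rw [hChdef]
          simp only [Finset.mem_filter, Finset.mem_univ, true_and]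
          omega
        have hgle : ∀ i ∈ Ch, (if load a i = K then 1 else 0) + (if i = b j₀ then 1 else 0)
            ≤ load a i - load b i := by
          intro i hi
          have h1 := hmemCh i hi
          have h2 := hmtop i
          have h3 := hKlow i
          have h4 := hle i
          by_cases h5 : i = b j₀
          · subst h5; split_ifs <;> omega
          · split_ifs <;> omega
        have hXb : ChH.card + 1 ≤ ∑ i ∈ Ch, (load a i - load b i) := by
          calc ChH.card + 1
              = ∑ i ∈ Ch, ((if load a i = K then 1 else 0) + (if i = b j₀ then 1 else 0)) := by
                rw [Finset.sum_add_distrib, hChHdef, Finset.card_filter]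
                congr 1
                rw [Finset.sum_ite_eq' Ch (b j₀) (fun _ => 1), if_pos hi₁Ch]
            _ ≤ ∑ i ∈ Ch, (load a i - load b i) := Finset.sum_le_sum hgle
        omega
      · have hcards := Finset.card_le_card hsub
        rw [hfibB, hEcb, hsplitE] at hcards
        rw [hfibA, hsplitH] at hcards
        omega
  -- endgame
  obtain ⟨s, hs, hB, hA⟩ := key
  by_cases hELne : EL.Nonempty
  · obtain ⟨istar, histar, hminstar⟩ :=
      Finset.exists_min_image EL (fun i => (c.filter fun j => a j = i).card) hELne
    have histar' : load a istar = K - 1 := (Finset.mem_filter.mp histar).2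
    have hD : e * (c.filter fun j => a j = istar).card
        ≤ ∑ i ∈ EL, (c.filter fun j => a j = i).card := by
      rw [heEL]
      have := Finset.card_nsmul_le_sum EL (fun i => (c.filter fun j => a j = i).card)
        ((c.filter fun j => a j = istar).card) (fun i hi => hminstar i hi)
      simpa [smul_eq_mul] using this
    have hC : ∑ i ∈ ChH, (c.filter fun j => a j = i).card
        ≤ ChH.card * ((c.filter fun j => a j = istar).card + 1) := by
      have := Finset.sum_le_card_nsmul ChH (fun i => (c.filter fun j => a j = i).card)
        ((c.filter fun j => a j = istar).card + 1)
        (fun i hi => hcond i istar ((Finset.mem_filter.mp hi).2) histar')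
      simpa [smul_eq_mul] using this
    exact RSGaux hs hB hA hC hD
  · have hEL0 : EL = ∅ := Finset.not_nonempty_iff_eq_empty.mp hELne
    have he0 : e = 0 := by rw [heEL, hEL0]; simp
    have hkk : ChH = ∅ := by
      rw [he0] at hB
      exact Finset.card_eq_zero.mp (by omega)
    rw [hEL0, hkk, he0] at hA
    simp at hA
    rw [hkk, Finset.card_empty, he0] at hB
    omega
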